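/- arXiv:2110.01463 — 4 statements merged into one kernel-verified Lean document; each statement's English description precedes it below -/
import Mathlib

section
/- Let A, B, C be positive semi-definite real d×d matrices with A = B + C and B positive definite. Then for every nonzero vector x, (xᵀ A x)/(xᵀ B x) ≤ det(A)/det(B). -/
open Matrix Finset
open scoped MatrixOrder

private lemma weier {ι : Type*} (s : Finset ι) (f : ι → ℝ) (hf : ∀ i ∈ s, 0 ≤ f i) :
    1 + ∑ i ∈ s, f i ≤ ∏ i ∈ s, (1 + f i) := by
  classical
  induction s using Finset.cons_induction with
  | empty => simp
  | cons a s ha ih =>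
    rw [Finset.sum_cons, Finset.prod_cons]
    have hfa : 0 ≤ f a := hf a (Finset.mem_cons_self a s)
    have hs : ∀ i ∈ s, 0 ≤ f i := fun i hi => hf i (Finset.mem_cons_of_mem hi)
    have h1 : 1 + ∑ i ∈ s, f i ≤ ∏ i ∈ s, (1 + f i) := ih hs
    have hsum : 0 ≤ ∑ i ∈ s, f i := Finset.sum_nonneg hs
    nlinarith [h1, hfa, hsum]

private lemma quad_le {d : ℕ} {M : Matrix (Fin d) (Fin d) ℝ} (hM : M.PosSemidef)
    (y : Fin d → ℝ) : y ⬝ᵥ M *ᵥ y ≤ ((1 + M).det - 1) * (y ⬝ᵥ y) := by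
  classical
  have hH := hM.isHermitian
  set U : Matrix (Fin d) (Fin d) ℝ := (hH.eigenvectorUnitary : Matrix (Fin d) (Fin d) ℝ) with hU
  have hUmem := (hH.eigenvectorUnitary).2
  have hUU : U * star U = 1 := (Matrix.mem_unitaryGroup_iff).mp hUmem
  have hUU' : star U * U = 1 := (Matrix.mem_unitaryGroup_iff').mp hUmem
  set μ : Fin d → ℝ := hH.eigenvalues with hμ
  have hspec : M = U * Matrix.diagonal μ * star U := by
    have := hH.spectral_theorem
    simpa [hU, hμ] using this
  have hμnn : ∀ i, 0 ≤ μ i := fun i => hM.eigenvalues_nonneg i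
  -- determinant
  have hdet : (1 + M).det = ∏ i, (1 + μ i) := by
    have h1 : (1 : Matrix (Fin d) (Fin d) ℝ) + M
        = U * (1 + Matrix.diagonal μ) * star U := by
      rw [hspec, mul_add, add_mul, mul_one, hUU]
    have h2 : (1 : Matrix (Fin d) (Fin d) ℝ) + Matrix.diagonal μ
        = Matrix.diagonal (fun i => 1 + μ i) := by
      rw [← Matrix.diagonal_one, ← Matrix.diagonal_add]
    rw [h1, Matrix.det_mul_right_comm, hUU, one_mul, h2, Matrix.det_diagonal]
  -- quadratic form
  set z : Fin d → ℝ := Uᵀ *ᵥ y with hz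
  have hstar : star U = Uᵀ := by
    simp [Matrix.star_eq_conjTranspose, Matrix.conjTranspose_eq_transpose_of_trivial]
  have hUz : U *ᵥ z = y := by
    rw [hz, Matrix.mulVec_mulVec, ← hstar, hUU, Matrix.one_mulVec]
  have hzz : z ⬝ᵥ z = y ⬝ᵥ y := by
    calc z ⬝ᵥ z = z ⬝ᵥ (Uᵀ *ᵥ y) := by rw [← hz]
      _ = (z ᵥ* Uᵀ) ⬝ᵥ y := Matrix.dotProduct_mulVec _ _ _
      _ = (U *ᵥ z) ⬝ᵥ y := by rw [Matrix.vecMul_transpose]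
      _ = y ⬝ᵥ y := by rw [hUz]
  have hquad : y ⬝ᵥ M *ᵥ y = ∑ i, μ i * (z i)^2 := by
    rw [hspec, hstar, ← Matrix.mulVec_mulVec, ← Matrix.mulVec_mulVec,
      Matrix.dotProduct_mulVec, ← Matrix.mulVec_transpose, ← hz]
    simp only [dotProduct, Matrix.mulVec_diagonal]
    exact Finset.sum_congr rfl fun i _ => by ring
  have hzi : ∀ i, (z i)^2 ≤ z ⬝ᵥ z := by
    intro i
    have : z ⬝ᵥ z = ∑ j, (z j)^2 := by
      simp [dotProduct, pow_two]
    rw [this]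
    exact Finset.single_le_sum (fun j _ => sq_nonneg (z j)) (Finset.mem_univ i)
  have hzznn : 0 ≤ z ⬝ᵥ z := Finset.sum_nonneg fun i _ => mul_self_nonneg (z i)
  calc y ⬝ᵥ M *ᵥ y = ∑ i, μ i * (z i)^2 := hquad
    _ ≤ ∑ i, μ i * (z ⬝ᵥ z) := by
        apply Finset.sum_le_sum
        intro i _
        exact mul_le_mul_of_nonneg_left (hzi i) (hμnn i)
    _ = (∑ i, μ i) * (z ⬝ᵥ z) := by rw [← Finset.sum_mul]
    _ ≤ ((1 + M).det - 1) * (z ⬝ᵥ z) := by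
        apply mul_le_mul_of_nonneg_right _ hzznn
        have := weier Finset.univ μ (fun i _ => hμnn i)
        rw [hdet]
        linarith
    _ = ((1 + M).det - 1) * (y ⬝ᵥ y) := by rw [hzz]

theorem stmt0 {d : ℕ} (A B C : Matrix (Fin d) (Fin d) ℝ)
    (hA : A.PosSemidef) (hB : B.PosDef) (hC : C.PosSemidef)
    (hABC : A = B + C) :
    ∀ x : Fin d → ℝ, x ≠ 0 →
      (x ⬝ᵥ A *ᵥ x) / (x ⬝ᵥ B *ᵥ x) ≤ A.det / B.det := by
  classical
  intro x hx
  set S : Matrix (Fin d) (Fin d) ℝ := CFC.sqrt B with hSdef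
  have hS : S.PosSemidef := (CFC.sqrt_nonneg B).posSemidef
  have hSS : S * S = B := CFC.sqrt_mul_sqrt_self B hB.posSemidef.nonneg
  have hdetS : S.det ≠ 0 := by
    intro h
    have : B.det = S.det * S.det := by rw [← hSS, Matrix.det_mul]
    rw [h, mul_zero] at this
    exact (ne_of_gt hB.det_pos) this
  have hSinv : S * S⁻¹ = 1 := Matrix.mul_nonsing_inv S (isUnit_iff_ne_zero.mpr hdetS)
  have hSinv' : S⁻¹ * S = 1 := Matrix.nonsing_inv_mul S (isUnit_iff_ne_zero.mpr hdetS)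
  have hSsymm : Sᵀ = S := hS.isHermitian
  have hSinvsymm : (S⁻¹)ᵀ = S⁻¹ := by rw [Matrix.transpose_nonsing_inv, hSsymm]
  set M : Matrix (Fin d) (Fin d) ℝ := S⁻¹ * C * S⁻¹ with hMdef
  have hM : M.PosSemidef := by
    have : (S⁻¹ * C * (S⁻¹)ᴴ).PosSemidef := hC.mul_mul_conjTranspose_same S⁻¹
    simpa [Matrix.conjTranspose_eq_transpose_of_trivial, hSinvsymm] using this
  have hAfact : A = S * (1 + M) * S := by
    rw [hABC, mul_add, add_mul, mul_one, hSS, hMdef]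
    congr 1
    symm
    calc S * (S⁻¹ * C * S⁻¹) * S = (S * S⁻¹) * C * (S⁻¹ * S) := by
          noncomm_ring
      _ = C := by rw [hSinv, hSinv', one_mul, mul_one]
  have hdetA : A.det = S.det * (1 + M).det * S.det := by
    rw [hAfact, Matrix.det_mul, Matrix.det_mul]
  have hdetB : B.det = S.det * S.det := by rw [← hSS, Matrix.det_mul]
  set y : Fin d → ℝ := S *ᵥ x with hy
  have hyne : y ≠ 0 := by
    intro h
    apply hx
    have := congrArg (fun v => S⁻¹ *ᵥ v) h
    simpa [hy, Matrix.mulVec_mulVec, hSinv', Matrix.one_mulVec] using this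
  have hquadB : x ⬝ᵥ B *ᵥ x = y ⬝ᵥ y := by
    rw [← hSS, hy, ← Matrix.mulVec_mulVec, Matrix.dotProduct_mulVec,
      ← Matrix.mulVec_transpose, hSsymm]
  have hquadA : x ⬝ᵥ A *ᵥ x = y ⬝ᵥ (1 + M) *ᵥ y := by
    rw [hAfact, hy, ← Matrix.mulVec_mulVec, ← Matrix.mulVec_mulVec, Matrix.dotProduct_mulVec,
      ← Matrix.mulVec_transpose, hSsymm]
  have hyy : 0 < y ⬝ᵥ y := by
    have hnn : 0 ≤ y ⬝ᵥ y := Finset.sum_nonneg fun i _ => mul_self_nonneg (y i)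
    rcases hnn.lt_or_eq with h | h
    · exact h
    · exact absurd (dotProduct_self_eq_zero.mp h.symm) hyne
  have hdd : A.det / B.det = (1 + M).det := by
    rw [hdetA, hdetB]
    field_simp
  rw [hquadA, hquadB, hdd, div_le_iff₀ hyy]
  have hq := quad_le hM y
  have hsplit : y ⬝ᵥ (1 + M) *ᵥ y = y ⬝ᵥ y + y ⬝ᵥ M *ᵥ y := by
    rw [Matrix.add_mulVec, Matrix.one_mulVec, dotProduct_add]
  rw [hsplit]
  nlinarith [hq, hyy]
end

section
/- Let V_g, ΔV be symmetric positive semi-definite d×d matrices and λ > 0, with V' = V_g + λI − ΔV positive definite (i.e., ΔV ⪯ V_g + λI). If det(V_g + λI)/det(V') ≤ γ, then for every nonzero x ∈ ℝ^d, xᵀ(V_g + λI)x ≤ γ · xᵀ V' x. -/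
open Matrix

theorem rayleigh_aux {n : ℕ} (M : Matrix (Fin n) (Fin n) ℝ) (hM : M.IsHermitian)
    (h1 : ∀ i, 1 ≤ hM.eigenvalues i) (y : Fin n → ℝ) :
    y ⬝ᵥ M *ᵥ y ≤ (∏ i, hM.eigenvalues i) * (y ⬝ᵥ y) := by
  set U : Matrix (Fin n) (Fin n) ℝ := (hM.eigenvectorUnitary : Matrix (Fin n) (Fin n) ℝ) with hU
  set z : Fin n → ℝ := star U *ᵥ y with hz
  have hdot : ∀ w : Fin n → ℝ, z ⬝ᵥ w = y ⬝ᵥ (U *ᵥ w) := by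
    intro w
    rw [hz, show star U = Uᵀ from rfl, mulVec_transpose, ← dotProduct_mulVec]
  have hUz : U *ᵥ z = y := by
    rw [hz, mulVec_mulVec]
    rw [show U * star U = 1 from Unitary.coe_mul_star_self _, one_mulVec]
  have hform : y ⬝ᵥ M *ᵥ y = ∑ i, hM.eigenvalues i * z i ^ 2 := by
    conv_lhs => rw [hM.spectral_theorem, Unitary.conjStarAlgAut_apply, ← hU]
    rw [show (U * diagonal (RCLike.ofReal ∘ hM.eigenvalues) * star U : Matrix _ _ ℝ) *ᵥ y
      = U *ᵥ (diagonal (RCLike.ofReal ∘ hM.eigenvalues) *ᵥ z) from by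
        simp [hz, mulVec_mulVec, Matrix.mul_assoc]]
    rw [← hdot]
    simp [dotProduct, mulVec_diagonal]
    exact Finset.sum_congr rfl fun i _ => by ring
  have hnorm : y ⬝ᵥ y = ∑ i, z i ^ 2 := by
    have : y ⬝ᵥ y = y ⬝ᵥ (U *ᵥ z) := by rw [hUz]
    rw [this, ← hdot]
    simp [dotProduct]
    ring_nf
  rw [hform, hnorm, Finset.mul_sum]
  apply Finset.sum_le_sum
  intro i _
  have hle : hM.eigenvalues i ≤ ∏ j, hM.eigenvalues j := by
    rw [← Finset.mul_prod_erase Finset.univ _ (Finset.mem_univ i)]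
    refine le_mul_of_one_le_right (le_trans zero_le_one (h1 i)) ?_
    calc (1:ℝ) = ∏ _j ∈ Finset.univ.erase i, (1:ℝ) := by simp
    _ ≤ ∏ j ∈ Finset.univ.erase i, hM.eigenvalues j :=
      Finset.prod_le_prod (fun _ _ => zero_le_one) (fun j _ => h1 j)
  exact mul_le_mul_of_nonneg_right hle (sq_nonneg _)


theorem stmt5 {d : ℕ} (Vg ΔV : Matrix (Fin d) (Fin d) ℝ) (lam γ : ℝ) (hlam : 0 < lam)
    (hVg : Vg.PosSemidef) (hΔV : ΔV.PosSemidef)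
    (hV' : (Vg + lam • (1 : Matrix (Fin d) (Fin d) ℝ) - ΔV).PosDef)
    (hdet : (Vg + lam • (1 : Matrix (Fin d) (Fin d) ℝ)).det /
        (Vg + lam • (1 : Matrix (Fin d) (Fin d) ℝ) - ΔV).det ≤ γ) :
    ∀ x : Fin d → ℝ, x ≠ 0 →
      x ⬝ᵥ (Vg + lam • (1 : Matrix (Fin d) (Fin d) ℝ)) *ᵥ x ≤
        γ * (x ⬝ᵥ (Vg + lam • (1 : Matrix (Fin d) (Fin d) ℝ) - ΔV) *ᵥ x) := by
  intro x hx
  set A : Matrix (Fin d) (Fin d) ℝ := Vg + lam • 1 with hAdef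
  set B : Matrix (Fin d) (Fin d) ℝ := A - ΔV with hBdef
  have hB : B.PosDef := hV'
  have hA : A.PosDef := by
    have := hB.add_posSemidef hΔV
    rwa [hBdef, sub_add_cancel] at this
  set S : Matrix (Fin d) (Fin d) ℝ := (open scoped MatrixOrder in CFC.sqrt B) with hSdef
  have hS : S.PosSemidef := by
    open scoped MatrixOrder in exact (CFC.sqrt_nonneg B).posSemidef
  have hSS : S * S = B := by
    open scoped MatrixOrder in exact CFC.sqrt_mul_sqrt_self B hB.posSemidef.nonneg
  have hdetS : S.det * S.det = B.det := by rw [← det_mul, hSS]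
  have hdetSne : S.det ≠ 0 := by
    intro h
    have := hB.det_pos
    rw [← hdetS, h, mul_zero] at this
    exact lt_irrefl _ this
  have hSunit : IsUnit S.det := hdetSne.isUnit
  set T : Matrix (Fin d) (Fin d) ℝ := S⁻¹ with hTdef
  have hTS : T * S = 1 := nonsing_inv_mul S hSunit
  have hST : S * T = 1 := mul_nonsing_inv S hSunit
  have hSt : Sᵀ = S := by
    ext i j
    have := congrFun (congrFun hS.1 i) j
    simpa [conjTranspose_apply] using this
  have hTherm : T.IsHermitian := hS.1.inv
  have hTt : Tᴴ = T := hTherm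
  set M : Matrix (Fin d) (Fin d) ℝ := T * A * T with hMdef
  have hMpsd : M.PosSemidef := by
    have := hA.posSemidef.conjTranspose_mul_mul_same T
    rwa [hTt] at this
  have hM : M.IsHermitian := hMpsd.1
  have hTBT : T * B * T = 1 := by
    rw [← hSS, show T * (S * S) * T = (T * S) * (S * T) by
      simp only [Matrix.mul_assoc], hTS, hST, one_mul]
  have hMsub : M - 1 = T * ΔV * T := by
    rw [← hTBT, hMdef, hBdef]
    noncomm_ring
  have hM1psd : (M - 1).PosSemidef := by
    rw [hMsub]
    have := hΔV.conjTranspose_mul_mul_same T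
    rwa [hTt] at this
  -- eigenvalues of M are ≥ 1
  have h1 : ∀ i, 1 ≤ hM.eigenvalues i := by
    intro i
    have hv1 : ‖hM.eigenvectorBasis i‖ = 1 := hM.eigenvectorBasis.orthonormal.1 i
    set v : Fin d → ℝ := ⇑(hM.eigenvectorBasis i) with hv
    have hvv : v ⬝ᵥ v = 1 := by
      have h2 : (inner ℝ (hM.eigenvectorBasis i) (hM.eigenvectorBasis i) : ℝ) = 1 := by
        rw [real_inner_self_eq_norm_sq, hv1]; norm_num
      rw [← h2, EuclideanSpace.inner_eq_star_dotProduct]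
      simp [dotProduct, PiLp.inner_apply, hv]
    have h0 : 0 ≤ v ⬝ᵥ (M - 1) *ᵥ v := hM1psd.dotProduct_mulVec_nonneg v
    rw [sub_mulVec, one_mulVec, hv, hM.mulVec_eigenvectorBasis, ← hv] at h0
    have : (0:ℝ) ≤ hM.eigenvalues i * (v ⬝ᵥ v) - v ⬝ᵥ v := by
      simpa [dotProduct_sub, dotProduct_smul] using h0
    rw [hvv] at this
    linarith
  set y : Fin d → ℝ := S *ᵥ x with hy
  have hSdot : ∀ w, (S *ᵥ x) ⬝ᵥ w = x ⬝ᵥ (S *ᵥ w) := by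
    intro w
    have h' : S *ᵥ x = x ᵥ* S := by
      nth_rw 1 [← hSt]
      exact mulVec_transpose S x
    rw [h', ← dotProduct_mulVec]
  have claim1 : y ⬝ᵥ M *ᵥ y = x ⬝ᵥ A *ᵥ x := by
    rw [hy, mulVec_mulVec, hSdot, mulVec_mulVec,
      show S * (M * S) = (S * T) * A * (T * S) by simp only [hMdef, Matrix.mul_assoc],
      hTS, hST, one_mul, Matrix.mul_one]
  have claim2 : y ⬝ᵥ y = x ⬝ᵥ B *ᵥ x := by
    rw [hy, hSdot, mulVec_mulVec, hSS]
  have hdetM : M.det = A.det / B.det := by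
    rw [hMdef, det_mul, det_mul, hTdef, det_nonsing_inv, Ring.inverse_eq_inv]
    rw [← hdetS]
    field_simp
  have hprod : (∏ i, hM.eigenvalues i) = A.det / B.det := by
    rw [← hdetM, hM.det_eq_prod_eigenvalues]
    norm_num
  have key := rayleigh_aux M hM h1 y
  rw [claim1, claim2, hprod] at key
  have hxBx : 0 < x ⬝ᵥ B *ᵥ x := by
    have := hB.dotProduct_mulVec_pos hx
    simpa using this
  calc x ⬝ᵥ A *ᵥ x ≤ A.det / B.det * (x ⬝ᵥ B *ᵥ x) := key
    _ ≤ γ * (x ⬝ᵥ B *ᵥ x) := mul_le_mul_of_nonneg_right hdet (le_of_lt hxBx)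
end

section
/- Let x₁, …, x_T ∈ ℝ^d with ‖x_t‖₂ ≤ 1, λ ≥ 1, and V_t = λI + Σ_{s=1}^{t} x_s x_sᵀ. Then Σ_{t=1}^{T} xₜᵀ V_{t−1}⁻¹ xₜ ≤ 2 log(det(V_T)/det(λI)). -/
open Matrix Finset

private lemma epl_scalar {u : ℝ} (h0 : 0 ≤ u) (h1 : u ≤ 1) :
    u ≤ 2 * Real.log (1 + u) := by
  have hE : 0 < Real.exp (u / 2) := Real.exp_pos _
  have h2 : Real.exp (u / 2) * (1 - u / 2) ≤ 1 := by
    have h3 := Real.add_one_le_exp (-(u / 2))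
    have h4 : Real.exp (-(u / 2)) * Real.exp (u / 2) = 1 := by
      rw [← Real.exp_add]; simp
    nlinarith
  have h5 : Real.exp (u / 2) ≤ 1 + u := by nlinarith
  have h6 : u / 2 ≤ Real.log (1 + u) :=
    (Real.le_log_iff_exp_le (by linarith)).2 h5
  linarith

private lemma epl_dp_self_nonneg {d : ℕ} (v : Fin d → ℝ) : 0 ≤ v ⬝ᵥ v := by
  simpa using dotProduct_self_star_nonneg v

private lemma epl_psd_vecMulVec {d : ℕ} (v : Fin d → ℝ) :
    (vecMulVec v v).PosSemidef := by
  have h : vecMulVec v v = (replicateRow (Fin 1) v)ᴴ * replicateRow (Fin 1) v := by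
    rw [vecMulVec_eq (Fin 1), conjTranspose_replicateRow]
    rfl
  rw [h]
  exact posSemidef_conjTranspose_mul_self _

open scoped MatrixOrder in
private lemma epl_sqrt {d : ℕ} {A : Matrix (Fin d) (Fin d) ℝ} (P : A.PosSemidef) :
    ∃ W : Matrix (Fin d) (Fin d) ℝ, W.PosSemidef ∧ W * W = A :=
  ⟨CFC.sqrt A, Matrix.nonneg_iff_posSemidef.mp (CFC.sqrt_nonneg A),
    CFC.sqrt_mul_sqrt_self A (Matrix.nonneg_iff_posSemidef.mpr P)⟩

theorem stmt7 {d : ℕ} (T : ℕ) (x : ℕ → (Fin d → ℝ)) (lam : ℝ) (hlam : 1 ≤ lam)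
    (hx : ∀ t, x t ⬝ᵥ x t ≤ 1)
    (V : ℕ → Matrix (Fin d) (Fin d) ℝ)
    (hV : ∀ t, V t = lam • (1 : Matrix (Fin d) (Fin d) ℝ) +
      ∑ s ∈ Finset.range t, vecMulVec (x s) (x s)) :
    ∑ t ∈ Finset.range T, x t ⬝ᵥ (V t)⁻¹ *ᵥ x t ≤
      2 * Real.log ((V T).det / (lam • (1 : Matrix (Fin d) (Fin d) ℝ)).det) := by
  have hlam0 : (0:ℝ) < lam := by linarith
  -- positive definiteness of lam • 1
  have hI : (lam • (1 : Matrix (Fin d) (Fin d) ℝ)).PosDef := by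
    refine Matrix.PosDef.of_dotProduct_mulVec_pos ?_ ?_
    · simp [IsHermitian]
    · intro y hy
      have h1 : (lam • (1 : Matrix (Fin d) (Fin d) ℝ)) *ᵥ y = lam • y := by
        simp [smul_mulVec]
      have h2 : (0:ℝ) < y ⬝ᵥ y := by
        rcases lt_or_eq_of_le (epl_dp_self_nonneg y) with h | h
        · exact h
        · exact absurd (dotProduct_self_eq_zero.mp h.symm) hy
      simp only [star_trivial, h1, dotProduct_smul, smul_eq_mul]
      positivity
  -- positive semidefiniteness of the sums
  have hS : ∀ t : ℕ, (∑ s ∈ Finset.range t, vecMulVec (x s) (x s)).PosSemidef := by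
    intro t
    exact Finset.sum_induction _ Matrix.PosSemidef (fun a b ha hb => ha.add hb)
      Matrix.PosSemidef.zero (fun i _ => epl_psd_vecMulVec (x i))
  have hPD : ∀ t, (V t).PosDef := by
    intro t; rw [hV t]; exact hI.add_posSemidef (hS t)
  have hq0 : ∀ t, 0 ≤ x t ⬝ᵥ (V t)⁻¹ *ᵥ x t := by
    intro t
    have := ((hPD t).inv).posSemidef.dotProduct_mulVec_nonneg (x t)
    simpa using this
  -- q t ≤ 1
  have hq1 : ∀ t, x t ⬝ᵥ (V t)⁻¹ *ᵥ x t ≤ 1 := by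
    intro t
    have P : (V t).PosSemidef := (hPD t).posSemidef
    obtain ⟨W, hWpsd, hWW⟩ := epl_sqrt P
    have hdetV : 0 < (V t).det := (hPD t).det_pos
    have hdetW : W.det ≠ 0 := by
      intro h
      have : (W * W).det = 0 := by rw [det_mul, h, mul_zero]
      rw [hWW] at this; exact hdetV.ne' this
    have hWsymm : Wᵀ = W := by
      have := hWpsd.isHermitian
      simpa [IsHermitian] using this
    have hWinvsymm : (W⁻¹)ᵀ = W⁻¹ := by
      rw [transpose_nonsing_inv, hWsymm]
    have hVinv : (V t)⁻¹ = W⁻¹ * W⁻¹ := by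
      rw [← hWW, Matrix.mul_inv_rev]
    have hWv : ∀ a : Fin d → ℝ, a ᵥ* W = W *ᵥ a := by
      intro a; nth_rewrite 1 [← hWsymm]; rw [vecMul_transpose]
    have hWinvv : ∀ a : Fin d → ℝ, a ᵥ* W⁻¹ = W⁻¹ *ᵥ a := by
      intro a; nth_rewrite 1 [← hWinvsymm]; rw [vecMul_transpose]
    set z := W⁻¹ *ᵥ (x t) with hzdef
    have hqz : x t ⬝ᵥ (V t)⁻¹ *ᵥ x t = z ⬝ᵥ z := by
      rw [hVinv, ← Matrix.mulVec_mulVec, dotProduct_mulVec, hWinvv]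
    have hxWz : x t = W *ᵥ z := by
      rw [hzdef, Matrix.mulVec_mulVec, Matrix.mul_nonsing_inv _ (isUnit_iff_ne_zero.mpr hdetW),
        one_mulVec]
    have hxx : x t ⬝ᵥ x t = z ⬝ᵥ (V t) *ᵥ z := by
      rw [hxWz, dotProduct_mulVec, hWv, Matrix.mulVec_mulVec, hWW, dotProduct_comm]
    have hzVz : z ⬝ᵥ (V t) *ᵥ z = lam * (z ⬝ᵥ z) +
        z ⬝ᵥ (∑ s ∈ Finset.range t, vecMulVec (x s) (x s)) *ᵥ z := by
      rw [hV t, add_mulVec, dotProduct_add, smul_mulVec, one_mulVec,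
        dotProduct_smul, smul_eq_mul]
    have hSz : 0 ≤ z ⬝ᵥ (∑ s ∈ Finset.range t, vecMulVec (x s) (x s)) *ᵥ z := by
      have := (hS t).dotProduct_mulVec_nonneg z; simpa using this
    have hzznn : 0 ≤ z ⬝ᵥ z := epl_dp_self_nonneg z
    have hxle := hx t
    rw [hxx, hzVz] at hxle
    rw [hqz]
    nlinarith
  -- determinant recursion
  have hdet : ∀ t, (V (t+1)).det = (V t).det * (1 + x t ⬝ᵥ (V t)⁻¹ *ᵥ x t) := by
    intro t
    have hsplit : V (t+1) = V t + replicateCol (Fin 1) (x t) * replicateRow (Fin 1) (x t) := by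
      rw [hV (t+1), hV t, Finset.sum_range_succ, ← add_assoc, vecMulVec_eq (Fin 1)]
      rfl
    rw [hsplit, det_add_mul _ _ (isUnit_iff_ne_zero.mpr (hPD t).det_pos.ne')]
    congr 1
    have h2 : ((1 : Matrix (Fin 1) (Fin 1) ℝ) + replicateRow (Fin 1) (x t) * (V t)⁻¹ * replicateCol (Fin 1) (x t)).det
        = 1 + x t ⬝ᵥ (V t)⁻¹ *ᵥ x t := by
      rw [det_fin_one, Matrix.add_apply, Matrix.one_apply_eq, ← Matrix.replicateRow_vecMul,
        Matrix.replicateRow_mul_replicateCol_apply, ← dotProduct_mulVec]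
    convert h2 using 2
  have hdetpos : ∀ t, 0 < (V t).det := fun t => (hPD t).det_pos
  -- key step
  have key : ∀ t, x t ⬝ᵥ (V t)⁻¹ *ᵥ x t ≤
      2 * (Real.log (V (t+1)).det - Real.log (V t).det) := by
    intro t
    have h1 : Real.log (V (t+1)).det =
        Real.log (V t).det + Real.log (1 + x t ⬝ᵥ (V t)⁻¹ *ᵥ x t) := by
      rw [hdet t, Real.log_mul (hdetpos t).ne' (by nlinarith [hq0 t])]
    rw [h1]
    have := epl_scalar (hq0 t) (hq1 t)
    linarith
  calc ∑ t ∈ Finset.range T, x t ⬝ᵥ (V t)⁻¹ *ᵥ x t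
      ≤ ∑ t ∈ Finset.range T, 2 * (Real.log (V (t+1)).det - Real.log (V t).det) :=
        Finset.sum_le_sum fun t _ => key t
    _ = 2 * (Real.log (V T).det - Real.log (V 0).det) := by
        rw [← Finset.mul_sum, Finset.sum_range_sub (fun t => Real.log (V t).det)]
    _ ≤ 2 * Real.log ((V T).det / (lam • (1 : Matrix (Fin d) (Fin d) ℝ)).det) := by
        have hV0 : V 0 = lam • (1 : Matrix (Fin d) (Fin d) ℝ) := by
          rw [hV 0]; simp
        rw [Real.log_div (hdetpos T).ne' (by rw [← hV0]; exact (hdetpos 0).ne'), ← hV0]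
end

section
/- Let V, W be symmetric d×d matrices with W positive definite, V ⪰ W, and suppose det(V)/det(W) ≤ γ. Then for every nonzero x ∈ ℝ^d, xᵀ V x ≤ γ · xᵀ W x, and consequently xᵀ(V − W)x ≤ (γ − 1)·xᵀ W x. -/
open Matrix

set_option maxHeartbeats 1000000

theorem stmt12 {d : ℕ} (V W : Matrix (Fin d) (Fin d) ℝ)
    (hV : V.IsSymm) (hW : W.IsSymm) (hWpd : W.PosDef)
    (hdom : (V - W).PosSemidef) (γ : ℝ) (hdet : V.det / W.det ≤ γ) :
    ∀ x : Fin d → ℝ, x ≠ 0 →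
      x ⬝ᵥ V *ᵥ x ≤ γ * (x ⬝ᵥ W *ᵥ x) ∧
      x ⬝ᵥ (V - W) *ᵥ x ≤ (γ - 1) * (x ⬝ᵥ W *ᵥ x) := by
  have hWps := hWpd.posSemidef
  open scoped MatrixOrder in
  set S := CFC.sqrt W with hSdef
  open scoped MatrixOrder in
  have hSps : S.PosSemidef := (CFC.sqrt_nonneg W).posSemidef
  have hSH : S.IsHermitian := hSps.1
  open scoped MatrixOrder in
  have hSS : S * S = W := CFC.sqrt_mul_sqrt_self W hWps.nonneg
  have hdetW : 0 < W.det := hWpd.det_pos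
  have hdetSS : S.det * S.det = W.det := by rw [← det_mul, hSS]
  have hdetS : IsUnit S.det := by
    refine isUnit_iff_ne_zero.mpr fun h => ?_
    rw [h, zero_mul] at hdetSS
    exact hdetW.ne hdetSS
  set T := S⁻¹ with hTdef
  have hTS : T * S = 1 := nonsing_inv_mul S hdetS
  have hST : S * T = 1 := mul_nonsing_inv S hdetS
  have hTH : T.IsHermitian := hSH.inv
  have hVH : V.IsHermitian := by
    rw [IsHermitian, conjTranspose_eq_transpose_of_trivial]; exact hV
  set M := T * V * T with hMdef
  have hMH : M.IsHermitian := by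
    simp only [IsHermitian, hMdef, conjTranspose_mul, hTH.eq, hVH.eq, mul_assoc]
  -- M - 1 is PSD
  have hTWT : T * W * T = 1 := by
    rw [← hSS, ← mul_assoc, hTS, one_mul]; exact hST
  have hM1 : (M - 1).PosSemidef := by
    have heq : Tᴴ * (V - W) * T = M - 1 := by
      rw [hTH.eq, mul_sub, sub_mul, hTWT, hMdef]
    rw [← heq]
    exact hdom.conjTranspose_mul_mul_same T
  -- eigenvalues of M
  set μ := hMH.eigenvalues with hμdef
  have hμ1 : ∀ i, 1 ≤ μ i := by
    intro i
    have hv : M *ᵥ ⇑(hMH.eigenvectorBasis i) = μ i • ⇑(hMH.eigenvectorBasis i) :=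
      hMH.mulVec_eigenvectorBasis i
    set v : Fin d → ℝ := ⇑(hMH.eigenvectorBasis i) with hvdef
    have hvne : v ≠ 0 := by
      intro h
      apply hMH.eigenvectorBasis.orthonormal.ne_zero i
      ext j
      exact congrFun h j
    have hvv : 0 < v ⬝ᵥ v := by
      rcases lt_or_eq_of_le (Finset.sum_nonneg fun j _ => mul_self_nonneg (v j) :
        (0:ℝ) ≤ v ⬝ᵥ v) with h | h
      · exact h
      · exact absurd (dotProduct_self_eq_zero.mp h.symm) hvne
    have h0 := hM1.dotProduct_mulVec_nonneg v
    have hexp : star v ⬝ᵥ (M - 1) *ᵥ v = (μ i - 1) * (v ⬝ᵥ v) := by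
      rw [star_trivial, sub_mulVec, hv, one_mulVec, dotProduct_sub, dotProduct_smul,
        smul_eq_mul]
      ring
    rw [hexp] at h0
    nlinarith
  have hdetM : ∏ i, μ i ≤ γ := by
    have hdM : M.det = V.det / W.det := by
      rw [hMdef, det_mul, det_mul, hTdef, det_nonsing_inv,
        Ring.inverse_eq_inv, ← hdetSS]
      field_simp
    have hprod : M.det = ∏ i, μ i := by
      simpa using hMH.det_eq_prod_eigenvalues
    rw [← hprod, hdM]
    exact hdet
  have hμγ : ∀ i, γ - μ i ≥ 0 := by
    intro i
    have hrest : 1 ≤ ∏ j ∈ Finset.univ.erase i, μ j := by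
      calc (1:ℝ) = ∏ _j ∈ Finset.univ.erase i, (1:ℝ) := by simp
        _ ≤ ∏ j ∈ Finset.univ.erase i, μ j :=
            Finset.prod_le_prod (fun j _ => zero_le_one) (fun j _ => hμ1 j)
    have h1 : μ i ≤ μ i * ∏ j ∈ Finset.univ.erase i, μ j :=
      le_mul_of_one_le_right (by linarith [hμ1 i]) hrest
    have h2 : μ i * ∏ j ∈ Finset.univ.erase i, μ j = ∏ j, μ j :=
      Finset.mul_prod_erase _ _ (Finset.mem_univ i)
    have := h1.trans (h2.le.trans hdetM)
    linarith
  -- γ • 1 - M is PSD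
  set U : Matrix (Fin d) (Fin d) ℝ := ↑(hMH.eigenvectorUnitary) with hUdef
  have hUU : U * star U = 1 := (Matrix.mem_unitaryGroup_iff).mp hMH.eigenvectorUnitary.2
  have hγM : (γ • 1 - M).PosSemidef := by
    have hdiag : (diagonal fun i => γ - μ i).PosSemidef :=
      PosSemidef.diagonal fun i => hμγ i
    have := hdiag.mul_mul_conjTranspose_same U
    have heq : U * (diagonal fun i => γ - μ i) * Uᴴ = γ • 1 - M := by
      rw [← star_eq_conjTranspose]
      have hspec : M = U * diagonal (RCLike.ofReal ∘ μ) * star U := hMH.spectral_theorem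
      have hD : (diagonal fun i => γ - μ i) =
          γ • (1 : Matrix (Fin d) (Fin d) ℝ) - diagonal (RCLike.ofReal ∘ μ) := by
        rw [smul_one_eq_diagonal, ← diagonal_sub]
        congr 1
      rw [hD, mul_sub, sub_mul, ← hspec]
      congr 1
      rw [Matrix.mul_smul, mul_one, Matrix.smul_mul, hUU]
    rw [← heq]
    exact this
  -- transport back: γ • W - V is PSD
  have hSMS : S * M * S = V := by
    rw [hMdef, ← mul_assoc, ← mul_assoc, hST, one_mul, mul_assoc, hTS, mul_one]
  have hfinal : (γ • W - V).PosSemidef := by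
    have := hγM.mul_mul_conjTranspose_same S
    have heq : S * (γ • 1 - M) * Sᴴ = γ • W - V := by
      rw [hSH.eq, mul_sub, sub_mul, Matrix.mul_smul, mul_one, Matrix.smul_mul, hSS, hSMS]
    rw [← heq]
    exact this
  intro x _
  have h0 := hfinal.dotProduct_mulVec_nonneg x
  have hexp : star x ⬝ᵥ (γ • W - V) *ᵥ x = γ * (x ⬝ᵥ W *ᵥ x) - x ⬝ᵥ V *ᵥ x := by
    rw [star_trivial, sub_mulVec, smul_mulVec, dotProduct_sub, dotProduct_smul,
      smul_eq_mul]
  rw [hexp] at h0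
  have hsub : x ⬝ᵥ (V - W) *ᵥ x = x ⬝ᵥ V *ᵥ x - x ⬝ᵥ W *ᵥ x := by
    rw [sub_mulVec, dotProduct_sub]
  constructor
  · linarith
  · rw [hsub]; linarith
end
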